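/- Let K ≥ 2 be an integer and let f be any real-valued function on pairs (k, W) with k ∈ {1,…,K} and W ⊆ {1,…,K}\{k}. For ℓ ∈ {0,…,K−1} set x_ℓ = ∑_{k=1}^{K} ∑_{W ⊆ {1,…,K}\{k}, |W| = ℓ} f(k, W). Then (1/K!) ∑_{σ ∈ S_K} ∑_{j=1}^{K−1} [ ∑_{W ⊆ {1,…,K}\{σ(j)}} f(σ(j), W) − ∑_{W ⊆ {σ(1),…,σ(j−1)}} f(σ(j), W) ] = ∑_{ℓ=0}^{K−1} (ℓ/(ℓ+1))·x_ℓ, where S_K is the set of all permutations of {1,…,K}. -/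

import Mathlib

open Finset

lemma image_swap_self {K : ℕ} {S : Finset (Fin K)} {a k : Fin K} (ha : a ∈ S) (hk : k ∈ S) :
    S.image (Equiv.swap a k) = S := by
  ext x
  simp only [mem_image]
  constructor
  · rintro ⟨y, hy, rfl⟩
    rcases eq_or_ne y a with rfl | h1
    · simpa [Equiv.swap_apply_left] using hk
    rcases eq_or_ne y k with rfl | h2
    · simpa [Equiv.swap_apply_right] using ha
    · rwa [Equiv.swap_apply_of_ne_of_ne h1 h2]
  · intro hx
    refine ⟨Equiv.swap a k x, ?_, by simp⟩
    rcases eq_or_ne x a with rfl | h1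
    · simpa [Equiv.swap_apply_left] using hk
    rcases eq_or_ne x k with rfl | h2
    · simpa [Equiv.swap_apply_right] using ha
    · rwa [Equiv.swap_apply_of_ne_of_ne h1 h2]

lemma argmax_count {K : ℕ} (S : Finset (Fin K)) (k : Fin K) (hk : k ∈ S) :
    S.card * (univ.filter (fun τ : Equiv.Perm (Fin K) => ∀ b ∈ S, b ≠ k → τ b < τ k)).card
      = K.factorial := by
  have hne : S.Nonempty := ⟨k, hk⟩
  set g : Equiv.Perm (Fin K) → Fin K :=
    fun τ => τ.symm ((S.image τ).max' (hne.image τ)) with hg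
  have hgS : ∀ τ, g τ ∈ S := by
    intro τ
    obtain ⟨b, hb, hbe⟩ := mem_image.mp ((S.image τ).max'_mem (hne.image τ))
    simpa [hg, ← hbe] using hb
  have hτg : ∀ τ : Equiv.Perm (Fin K), τ (g τ) = (S.image τ).max' (hne.image τ) := by
    intro τ; simp [hg]
  have hgchar : ∀ (τ : Equiv.Perm (Fin K)) (a : Fin K), a ∈ S →
      (g τ = a ↔ ∀ b ∈ S, b ≠ a → τ b < τ a) := by
    intro τ a ha
    constructor
    · rintro rfl
      intro b hb hba
      have h1 : τ b ≤ τ (g τ) := by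
        rw [hτg]; exact le_max' _ _ (mem_image_of_mem τ hb)
      have h2 : τ b ≠ τ (g τ) := fun h => hba (τ.injective h)
      exact lt_of_le_of_ne h1 h2
    · intro h
      obtain ⟨c, hc, hce⟩ := mem_image.mp ((S.image τ).max'_mem (hne.image τ))
      have hca : c = a := by
        by_contra hne'
        have h1 : τ c < τ a := h c hc hne'
        have h2 : τ a ≤ τ c := by
          rw [hce]; exact le_max' _ _ (mem_image_of_mem τ ha)
        exact absurd h2 (not_le.mpr h1)
      have : g τ = τ.symm (τ a) := by rw [hg]; simp [← hce, hca]
      simpa using this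
  have hgcomp : ∀ (τ : Equiv.Perm (Fin K)) (a : Fin K), a ∈ S →
      g (τ * Equiv.swap a k) = Equiv.swap a k (g τ) := by
    intro τ a ha
    have himg : S.image ⇑(τ * Equiv.swap a k) = S.image τ := by
      have : ⇑(τ * Equiv.swap a k) = ⇑τ ∘ ⇑(Equiv.swap a k) := rfl
      rw [this, ← Finset.image_image, image_swap_self ha hk]
    simp only [hg, himg]
    rfl
  have hfib : ∀ a ∈ S,
      (univ.filter (fun τ : Equiv.Perm (Fin K) => g τ = a)).card
        = (univ.filter (fun τ : Equiv.Perm (Fin K) => g τ = k)).card := by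
    intro a ha
    apply Finset.card_nbij (fun τ => τ * Equiv.swap a k)
    · intro τ hτ
      simp only [Finset.mem_coe, mem_filter, mem_univ, true_and] at hτ ⊢
      rw [hgcomp τ a ha, hτ, Equiv.swap_apply_left]
    · intro τ1 _ τ2 _ h
      exact mul_right_cancel h
    · intro τ hτ
      simp only [Finset.coe_filter, Set.mem_setOf_eq, mem_univ, true_and] at hτ ⊢
      refine ⟨τ * Equiv.swap a k, ?_, by simp [mul_assoc]⟩
      rw [Set.mem_setOf_eq, hgcomp τ a ha, hτ, Equiv.swap_apply_right]
  have hpart : (univ : Finset (Equiv.Perm (Fin K))).card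
      = ∑ a ∈ S, (univ.filter (fun τ => g τ = a)).card :=
    Finset.card_eq_sum_card_fiberwise (fun τ _ => hgS τ)
  have : (univ : Finset (Equiv.Perm (Fin K))).card
      = S.card * (univ.filter (fun τ => g τ = k)).card := by
    rw [hpart, Finset.sum_congr rfl hfib, Finset.sum_const, smul_eq_mul]
  have hfe : (univ.filter (fun τ : Equiv.Perm (Fin K) => g τ = k))
      = (univ.filter (fun τ : Equiv.Perm (Fin K) => ∀ b ∈ S, b ≠ k → τ b < τ k)) := by
    apply Finset.filter_congr
    intro τ _
    simpa using hgchar τ k hk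
  rw [hfe] at this
  rw [← this, Finset.card_univ, Fintype.card_perm, Fintype.card_fin]
lemma max_count {K : ℕ} (k : Fin K) (W : Finset (Fin K)) (hkW : k ∉ W)
    (harg : (insert k W).card *
      (univ.filter (fun τ : Equiv.Perm (Fin K) => ∀ b ∈ insert k W, b ≠ k → τ b < τ k)).card
        = K.factorial) :
    (W.card + 1) *
      (univ.filter (fun τ : Equiv.Perm (Fin K) => ∀ w ∈ W, τ w < τ k)).card = K.factorial := by
  rw [card_insert_of_notMem hkW] at harg
  convert harg using 3
  apply Finset.filter_congr
  intro τ _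
  constructor
  · intro h b hb hbk
    rcases mem_insert.mp hb with rfl | hbW
    · exact absurd rfl hbk
    · exact h b hbW
  · intro h w hw
    exact h w (mem_insert_of_mem hw) (fun he => hkW (he ▸ hw))

lemma key_count {K : ℕ} (hK : 2 ≤ K) (h : K - 1 ≤ K) (k : Fin K) (W : Finset (Fin K))
    (hkW : k ∉ W)
    (hM : (W.card + 1) *
      (univ.filter (fun τ : Equiv.Perm (Fin K) => ∀ w ∈ W, τ w < τ k)).card = K.factorial) :
    ∑ σ : Equiv.Perm (Fin K), ∑ j : Fin (K - 1),
      ((if σ (Fin.castLE h j) = k then (1:ℝ) else 0) -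
        (if σ (Fin.castLE h j) = k ∧
            W ⊆ (Finset.univ.filter (fun i : Fin K => (i : ℕ) < (j : ℕ))).image σ
          then (1:ℝ) else 0))
    = (K.factorial : ℝ) - (K.factorial : ℝ) / (W.card + 1) := by
  set M := (univ.filter (fun τ : Equiv.Perm (Fin K) => ∀ w ∈ W, τ w < τ k)).card with hMdef
  -- per-σ inner sum
  have hinner : ∀ σ : Equiv.Perm (Fin K),
      ∑ j : Fin (K - 1),
        ((if σ (Fin.castLE h j) = k then (1:ℝ) else 0) -
          (if σ (Fin.castLE h j) = k ∧
              W ⊆ (Finset.univ.filter (fun i : Fin K => (i : ℕ) < (j : ℕ))).image σ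
            then (1:ℝ) else 0))
      = 1 - (if ∀ w ∈ W, σ.symm w < σ.symm k then (1:ℝ) else 0) := by
    intro σ
    set m : ℕ := ((σ.symm k : Fin K) : ℕ) with hm
    have hcond1 : ∀ j : Fin (K - 1), (σ (Fin.castLE h j) = k) ↔ ((j : ℕ) = m) := by
      intro j
      rw [← Equiv.apply_symm_apply σ k, Equiv.apply_eq_iff_eq, Fin.ext_iff]
      simp [hm]
    have step1 : ∑ j : Fin (K - 1),
        ((if σ (Fin.castLE h j) = k then (1:ℝ) else 0) -
          (if σ (Fin.castLE h j) = k ∧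
              W ⊆ (Finset.univ.filter (fun i : Fin K => (i : ℕ) < (j : ℕ))).image σ
            then (1:ℝ) else 0))
        = ∑ n ∈ range (K - 1),
            ((if n = m then (1:ℝ) else 0) -
              (if n = m then
                (if W ⊆ (Finset.univ.filter (fun i : Fin K => (i : ℕ) < n)).image σ
                  then (1:ℝ) else 0) else 0)) := by
      rw [← Fin.sum_univ_eq_sum_range]
      apply Finset.sum_congr rfl
      intro j _
      rw [if_congr (hcond1 j) rfl rfl, if_congr (and_congr_left' (hcond1 j)) rfl rfl, ite_and]
    rw [step1, Finset.sum_sub_distrib, Finset.sum_ite_eq' (range (K-1)) m (fun _ => (1:ℝ)),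
      Finset.sum_ite_eq' (range (K-1)) m]
    have hQm : (W ⊆ (Finset.univ.filter (fun i : Fin K => (i : ℕ) < m)).image σ)
        ↔ (∀ w ∈ W, σ.symm w < σ.symm k) := by
      constructor
      · intro hsub w hw
        obtain ⟨i, hi, hie⟩ := mem_image.mp (hsub hw)
        have : i = σ.symm w := by rw [← hie, Equiv.symm_apply_apply]
        rw [Fin.lt_def, ← hm, ← this]
        exact (mem_filter.mp hi).2
      · intro hlt w hw
        refine mem_image.mpr ⟨σ.symm w, ?_, Equiv.apply_symm_apply σ w⟩
        simp only [mem_filter, mem_univ, true_and]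
        have := hlt w hw
        rwa [Fin.lt_def, ← hm] at this
    by_cases hmem : m ∈ range (K - 1)
    · rw [if_pos hmem, if_pos hmem, if_congr hQm rfl rfl]
    · have hB : ∀ w ∈ W, σ.symm w < σ.symm k := by
        have hmval : m = K - 1 := by
          have h1 : m < K := (σ.symm k).isLt
          have h2 : ¬ m < K - 1 := fun hc => hmem (mem_range.mpr hc)
          omega
        intro w hw
        have hne : σ.symm w ≠ σ.symm k := fun he => (hkW (by
          have := σ.symm.injective he; rwa [this] at hw))
        rw [Fin.lt_def, ← hm, hmval]
        have h1 : ((σ.symm w : Fin K) : ℕ) < K := (σ.symm w).isLt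
        have h2 : ((σ.symm w : Fin K) : ℕ) ≠ K - 1 := by
          intro hc
          apply hne
          apply Fin.ext
          rw [hc, ← hmval, hm]
        omega
      rw [if_neg hmem, if_neg hmem, if_pos hB]
      ring
  rw [Finset.sum_congr rfl (fun σ _ => hinner σ), Finset.sum_sub_distrib]
  have hcount : ∑ σ : Equiv.Perm (Fin K),
      (if ∀ w ∈ W, σ.symm w < σ.symm k then (1:ℝ) else 0) = (M : ℝ) := by
    rw [Finset.sum_boole]
    congr 1
    apply Finset.card_nbij (fun σ => σ⁻¹)
    · intro σ hσ
      simp only [Finset.mem_coe, mem_filter, mem_univ, true_and] at hσ ⊢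
      exact hσ
    · intro a _ b _ hab
      exact inv_injective hab
    · intro τ hτ
      simp only [Finset.coe_filter, Set.mem_setOf_eq, mem_univ, true_and] at hτ ⊢
      exact ⟨τ⁻¹, hτ, inv_inv τ⟩
  rw [hcount, Finset.sum_const, Finset.card_univ, Fintype.card_perm, Fintype.card_fin,
    nsmul_eq_mul, mul_one]
  have hMr : (M : ℝ) = (K.factorial : ℝ) / (W.card + 1) := by
    have : ((W.card : ℝ) + 1) * (M : ℝ) = (K.factorial : ℝ) := by
      exact_mod_cast congrArg (Nat.cast : ℕ → ℝ) hM
    field_simp at this ⊢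
    linarith [this]
  rw [hMr]
theorem perm_averaged_identity' (K : ℕ) (hK : 2 ≤ K) (f : Fin K → Finset (Fin K) → ℝ)
    (h : K - 1 ≤ K)
    (key : ∀ (k : Fin K) (W : Finset (Fin K)), k ∉ W →
      ∑ σ : Equiv.Perm (Fin K), ∑ j : Fin (K - 1),
        ((if σ (Fin.castLE h j) = k then (1:ℝ) else 0) -
          (if σ (Fin.castLE h j) = k ∧
              W ⊆ (Finset.univ.filter (fun i : Fin K => (i : ℕ) < (j : ℕ))).image σ
            then (1:ℝ) else 0))
      = (K.factorial : ℝ) - (K.factorial : ℝ) / (W.card + 1)) :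
    (1 / (K.factorial : ℝ)) *
      ∑ σ : Equiv.Perm (Fin K), ∑ j : Fin (K - 1),
        ((∑ W ∈ (Finset.univ \ {σ (Fin.castLE h j)}).powerset,
            f (σ (Fin.castLE h j)) W) -
          ∑ W ∈ ((Finset.univ.filter (fun i : Fin K => (i : ℕ) < (j : ℕ))).image σ).powerset,
            f (σ (Fin.castLE h j)) W) =
    ∑ ℓ ∈ Finset.range K, ((ℓ : ℝ) / ((ℓ : ℝ) + 1)) *
      ∑ k : Fin K, ∑ W ∈ (Finset.univ \ {k}).powersetCard ℓ, f k W := by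
  have hKfac : (K.factorial : ℝ) ≠ 0 := Nat.cast_ne_zero.mpr (Nat.factorial_ne_zero K)
  -- Step 1: expand each (σ, j) term as a sum over (k, W)
  have expand : ∀ (σ : Equiv.Perm (Fin K)) (j : Fin (K - 1)),
      ((∑ W ∈ (Finset.univ \ {σ (Fin.castLE h j)}).powerset, f (σ (Fin.castLE h j)) W) -
        ∑ W ∈ ((Finset.univ.filter (fun i : Fin K => (i : ℕ) < (j : ℕ))).image σ).powerset,
          f (σ (Fin.castLE h j)) W)
      = ∑ k : Fin K, ∑ W ∈ (Finset.univ \ {k}).powerset,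
          ((if σ (Fin.castLE h j) = k then (1:ℝ) else 0) -
            (if σ (Fin.castLE h j) = k ∧
                W ⊆ (Finset.univ.filter (fun i : Fin K => (i : ℕ) < (j : ℕ))).image σ
              then (1:ℝ) else 0)) * f k W := by
    intro σ j
    set a := σ (Fin.castLE h j) with ha
    set img := (Finset.univ.filter (fun i : Fin K => (i : ℕ) < (j : ℕ))).image σ with himgdef
    have himg : img ⊆ Finset.univ \ {a} := by
      intro x hx
      obtain ⟨i, hi, rfl⟩ := mem_image.mp hx
      simp only [mem_sdiff, mem_univ, true_and, mem_singleton]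
      intro he
      have hieq : i = Fin.castLE h j := σ.injective (by rw [he])
      have hilt := (mem_filter.mp hi).2
      rw [hieq] at hilt
      simp at hilt
    have eA : ∑ k : Fin K, ∑ W ∈ (Finset.univ \ {k}).powerset,
        (if a = k then (1:ℝ) else 0) * f k W
        = ∑ W ∈ (Finset.univ \ {a}).powerset, f a W := by
      rw [Finset.sum_eq_single a]
      · simp
      · intro b _ hb
        apply Finset.sum_eq_zero
        intro W _
        rw [if_neg (fun e => hb e.symm), zero_mul]
      · intro hc; exact absurd (mem_univ a) hc
    have eB : ∑ k : Fin K, ∑ W ∈ (Finset.univ \ {k}).powerset,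
        (if a = k ∧ W ⊆ img then (1:ℝ) else 0) * f k W
        = ∑ W ∈ img.powerset, f a W := by
      rw [Finset.sum_eq_single a]
      · calc ∑ W ∈ (Finset.univ \ {a}).powerset, (if a = a ∧ W ⊆ img then (1:ℝ) else 0) * f a W
            = ∑ W ∈ (Finset.univ \ {a}).powerset, (if W ⊆ img then f a W else 0) := by
              apply Finset.sum_congr rfl
              intro W _
              by_cases hw : W ⊆ img <;> simp [hw]
          _ = ∑ W ∈ (Finset.univ \ {a}).powerset.filter (· ⊆ img), f a W :=
              (Finset.sum_filter _ _).symm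
          _ = ∑ W ∈ img.powerset, f a W := by
              congr 1
              ext W
              simp only [mem_filter, mem_powerset]
              exact ⟨fun hw => hw.2, fun hw => ⟨hw.trans himg, hw⟩⟩
      · intro b _ hb
        apply Finset.sum_eq_zero
        intro W _
        rw [if_neg (fun hc => hb hc.1.symm), zero_mul]
      · intro hc; exact absurd (mem_univ a) hc
    rw [← eA, ← eB, ← Finset.sum_sub_distrib]
    apply Finset.sum_congr rfl
    intro k _
    rw [← Finset.sum_sub_distrib]
    apply Finset.sum_congr rfl
    intro W _
    ring
  rw [Finset.sum_congr rfl (fun σ _ => Finset.sum_congr rfl (fun j _ => expand σ j))]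
  -- Step 2: swap sums to bring (k, W) out
  have swap : ∑ σ : Equiv.Perm (Fin K), ∑ j : Fin (K - 1), ∑ k : Fin K,
        ∑ W ∈ (Finset.univ \ {k}).powerset,
          ((if σ (Fin.castLE h j) = k then (1:ℝ) else 0) -
            (if σ (Fin.castLE h j) = k ∧
                W ⊆ (Finset.univ.filter (fun i : Fin K => (i : ℕ) < (j : ℕ))).image σ
              then (1:ℝ) else 0)) * f k W
      = ∑ k : Fin K, ∑ W ∈ (Finset.univ \ {k}).powerset,
          ((K.factorial : ℝ) - (K.factorial : ℝ) / (W.card + 1)) * f k W := by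
    refine Eq.trans (Finset.sum_congr rfl (fun σ _ => Finset.sum_comm)) ?_
    refine Eq.trans Finset.sum_comm ?_
    refine Eq.trans (Finset.sum_congr rfl
      (fun k _ => Finset.sum_congr rfl (fun σ _ => Finset.sum_comm))) ?_
    refine Eq.trans (Finset.sum_congr rfl (fun k _ => Finset.sum_comm)) ?_
    apply Finset.sum_congr rfl
    intro k _
    apply Finset.sum_congr rfl
    intro W hW
    have hkW : k ∉ W := by
      intro hc
      have := (mem_powerset.mp hW) hc
      simp at this
    rw [← key k W hkW, Finset.sum_mul]
    apply Finset.sum_congr rfl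
    intro σ _
    exact (Finset.sum_mul _ _ _).symm
  rw [swap]
  -- Step 3: final algebra on both sides
  have lhs_eq : (1 / (K.factorial : ℝ)) *
      ∑ k : Fin K, ∑ W ∈ (Finset.univ \ {k}).powerset,
        ((K.factorial : ℝ) - (K.factorial : ℝ) / (W.card + 1)) * f k W
      = ∑ k : Fin K, ∑ W ∈ (Finset.univ \ {k}).powerset,
          ((W.card : ℝ) / ((W.card : ℝ) + 1)) * f k W := by
    rw [Finset.mul_sum]
    apply Finset.sum_congr rfl
    intro k _
    rw [Finset.mul_sum]
    apply Finset.sum_congr rfl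
    intro W _
    have hc1 : (W.card : ℝ) + 1 ≠ 0 := by positivity
    field_simp
    ring
  rw [lhs_eq]
  -- RHS transformation
  have hcard : ∀ k : Fin K, (Finset.univ \ {k}).card = K - 1 := by
    intro k
    rw [Finset.card_sdiff_of_subset (Finset.subset_univ {k}), Finset.card_univ, Fintype.card_fin,
      Finset.card_singleton]
  have hrange : K - 1 + 1 = K := by omega
  symm
  calc ∑ ℓ ∈ Finset.range K, ((ℓ : ℝ) / ((ℓ : ℝ) + 1)) *
        ∑ k : Fin K, ∑ W ∈ (Finset.univ \ {k}).powersetCard ℓ, f k W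
      = ∑ ℓ ∈ Finset.range K, ∑ k : Fin K,
          ∑ W ∈ (Finset.univ \ {k}).powersetCard ℓ, ((ℓ : ℝ) / ((ℓ : ℝ) + 1)) * f k W := by
        simp only [Finset.mul_sum]
    _ = ∑ k : Fin K, ∑ ℓ ∈ Finset.range K,
          ∑ W ∈ (Finset.univ \ {k}).powersetCard ℓ, ((ℓ : ℝ) / ((ℓ : ℝ) + 1)) * f k W :=
        Finset.sum_comm
    _ = ∑ k : Fin K, ∑ W ∈ (Finset.univ \ {k}).powerset,
          ((W.card : ℝ) / ((W.card : ℝ) + 1)) * f k W := by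
        apply Finset.sum_congr rfl
        intro k _
        rw [Finset.sum_powerset (Finset.univ \ {k})
          (fun W => ((W.card : ℝ) / ((W.card : ℝ) + 1)) * f k W), hcard k, hrange]
        apply Finset.sum_congr rfl
        intro ℓ _
        apply Finset.sum_congr rfl
        intro W hW
        rw [(Finset.mem_powersetCard.mp hW).2]

/-- The fully averaged combinatorial identity of the data-shuffling converse proof:
averaging over all `K!` permutations and all positions `j ∈ {1,…,K−1}` (encoded by
`j : Fin (K-1)`, representing the 1-indexed position `j+1`) yields
`∑_{ℓ=0}^{K−1} (ℓ/(ℓ+1))·x_ℓ`, where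
`x_ℓ = ∑_k ∑_{W ⊆ {1,…,K}\{k}, |W|=ℓ} f(k,W)`. -/
theorem perm_averaged_identity (K : ℕ) (hK : 2 ≤ K) (f : Fin K → Finset (Fin K) → ℝ) :
    (1 / (K.factorial : ℝ)) *
      ∑ σ : Equiv.Perm (Fin K), ∑ j : Fin (K - 1),
        ((∑ W ∈ (Finset.univ \ {σ (Fin.castLE (by omega) j)}).powerset,
            f (σ (Fin.castLE (by omega) j)) W) -
          ∑ W ∈ ((Finset.univ.filter (fun i : Fin K => (i : ℕ) < (j : ℕ))).image σ).powerset,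
            f (σ (Fin.castLE (by omega) j)) W) =
    ∑ ℓ ∈ Finset.range K, ((ℓ : ℝ) / ((ℓ : ℝ) + 1)) *
      ∑ k : Fin K, ∑ W ∈ (Finset.univ \ {k}).powersetCard ℓ, f k W := by
  exact perm_averaged_identity' K hK f (by omega) (fun k W hkW =>
    key_count hK (by omega) k W hkW
      (max_count k W hkW (argmax_count (insert k W) k (Finset.mem_insert_self k W))))
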